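/- (Monotonicity of the form-factor ratio, Eq. (der2).) Fix an integer m ≥ 1. For g > 1 define ε_x(g) = |g − e^{2πi x/m}| and L(g) = 2·Σ_{p=0}^{m−1} Σ_{q=0}^{m−1} log(ε_p(g) + ε_{q+1/2}(g)) − Σ_{p=0}^{m−1} Σ_{p'=0}^{m−1} log(ε_p(g) + ε_{p'}(g)) − Σ_{q=0}^{m−1} Σ_{q'=0}^{m−1} log(ε_{q+1/2}(g) + ε_{q'+1/2}(g)). Then for every g₀ > 1, L is differentiable at g₀ with L'(g₀) = (1/2)·(g₀⁻¹ − g₀)·( Z₊(g₀) − Z₋(g₀) )², where Z₊(g) = Σ_{p=0}^{m−1} ε_p(g)⁻¹ and Z₋(g) = Σ_{q=0}^{m−1} ε_{q+1/2}(g)⁻¹; in particular L'(g₀) ≤ 0, so L is nonincreasing on (1, ∞). -/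

import Mathlib

open scoped Real

/-- `ε_x = |g - e^{2πi x/m}|` for the transverse-field Ising chain of length `m`. -/
noncomputable def eps (m : ℕ) (g x : ℝ) : ℝ :=
  ‖(g : ℂ) - Complex.exp (2 * Real.pi * Complex.I * (x : ℂ) / (m : ℂ))‖

/-- The ground state energy splitting
`δ(g, m) = (1/2) (Σ_{j<m} ε_{j+1/2} - Σ_{j<m} ε_j)` of the periodic one-dimensional
transverse-field Ising chain on `m` qubits. -/
noncomputable def tfimDelta (m : ℕ) (g : ℝ) : ℝ :=
  (1 / 2) * ((∑ j ∈ Finset.range m, eps m g ((j : ℝ) + 1 / 2))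
    - ∑ j ∈ Finset.range m, eps m g (j : ℝ))

/-- `L(g) = 8 log η(g)`: the logarithm of the normalized form factor of the
one-dimensional transverse-field Ising chain, cf. Eq. (xi). -/
noncomputable def formFactorLog (m : ℕ) (g : ℝ) : ℝ :=
  2 * ∑ p ∈ Finset.range m, ∑ q ∈ Finset.range m,
      Real.log (eps m g (p : ℝ) + eps m g ((q : ℝ) + 1 / 2))
    - ∑ p ∈ Finset.range m, ∑ p' ∈ Finset.range m,
      Real.log (eps m g (p : ℝ) + eps m g ((p' : ℝ)))
    - ∑ q ∈ Finset.range m, ∑ q' ∈ Finset.range m,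
      Real.log (eps m g ((q : ℝ) + 1 / 2) + eps m g ((q' : ℝ) + 1 / 2))

/-- `Z₊(g) = Σ_p ε_p⁻¹` over integer momenta. -/
noncomputable def Zplus (m : ℕ) (g : ℝ) : ℝ :=
  ∑ p ∈ Finset.range m, (eps m g (p : ℝ))⁻¹

/-- `Z₋(g) = Σ_q ε_{q+1/2}⁻¹` over half-integer momenta. -/
noncomputable def Zminus (m : ℕ) (g : ℝ) : ℝ :=
  ∑ q ∈ Finset.range m, (eps m g ((q : ℝ) + 1 / 2))⁻¹

noncomputable def th (m : ℕ) (x : ℝ) : ℝ := 2 * Real.pi * x / m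

lemma eps_eq (m : ℕ) (g x : ℝ) :
    eps m g x = Real.sqrt ((g - Real.cos (th m x))^2 + (Real.sin (th m x))^2) := by
  unfold eps th
  have h : (2 * (Real.pi : ℂ) * Complex.I * (x : ℂ) / (m : ℂ))
      = ((2 * Real.pi * x / m : ℝ) : ℂ) * Complex.I := by
    push_cast; ring
  rw [h, Complex.exp_mul_I, ← Complex.ofReal_cos, ← Complex.ofReal_sin,
    Complex.norm_def, Complex.normSq_apply]
  congr 1
  simp only [Complex.sub_re, Complex.sub_im, Complex.add_re, Complex.add_im,
    Complex.ofReal_re, Complex.ofReal_im, Complex.mul_re, Complex.mul_im,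
    Complex.I_re, Complex.I_im]
  ring

lemma eps_pos (m : ℕ) {g : ℝ} (x : ℝ) (hg : 1 < g) : 0 < eps m g x := by
  rw [eps_eq]
  have h1 := Real.cos_le_one (th m x)
  apply Real.sqrt_pos.mpr
  nlinarith [sq_nonneg (Real.sin (th m x))]

lemma eps_sq (m : ℕ) (g x : ℝ) :
    (eps m g x)^2 = g^2 - 2*g*Real.cos (th m x) + 1 := by
  rw [eps_eq, Real.sq_sqrt (by positivity)]
  nlinarith [Real.sin_sq_add_cos_sq (th m x)]

lemma hasDerivAt_eps (m : ℕ) {g : ℝ} (x : ℝ) (hg : 1 < g) :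
    HasDerivAt (fun g => eps m g x)
      (eps m g x / (2*g) + (g^2 - 1)/(2*g*eps m g x)) g := by
  have hpos := eps_pos m x hg
  have hg0 : (0:ℝ) < g := lt_trans one_pos hg
  have hne : (g - Real.cos (th m x))^2 + (Real.sin (th m x))^2 ≠ 0 := by
    have := eps_eq m g x
    intro hc
    rw [hc, Real.sqrt_zero] at this
    exact hpos.ne' this
  have h1 : HasDerivAt (fun g : ℝ => (g - Real.cos (th m x))^2 + (Real.sin (th m x))^2)
      (2*(g - Real.cos (th m x))) g := by
    have := (((hasDerivAt_id g).sub_const (Real.cos (th m x))).pow 2).add_const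
      ((Real.sin (th m x))^2)
    simpa using this
  have h2 := h1.sqrt hne
  have heq : (fun g => eps m g x)
      = fun g => Real.sqrt ((g - Real.cos (th m x))^2 + (Real.sin (th m x))^2) := by
    funext y; exact eps_eq m y x
  rw [heq]
  convert h2 using 1
  rw [← eps_eq m g x]
  have hsq := eps_sq m g x
  field_simp
  linear_combination hsq

lemma hasDerivAt_logsum (m : ℕ) {g : ℝ} (x y : ℝ) (hg : 1 < g) :
    HasDerivAt (fun g => Real.log (eps m g x + eps m g y))
      ((2*g)⁻¹ + (g^2-1)/(2*g) * ((eps m g x)⁻¹ * (eps m g y)⁻¹)) g := by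
  have hx := eps_pos m x hg
  have hy := eps_pos m y hg
  have hg0 : (0:ℝ) < g := lt_trans one_pos hg
  have h := ((hasDerivAt_eps m x hg).fun_add (hasDerivAt_eps m y hg)).log
    (add_pos hx hy).ne'
  convert h using 1
  field_simp
  ring

lemma sum_expand (m : ℕ) (c k : ℝ) (u v : ℕ → ℝ) :
    ∑ p ∈ Finset.range m, ∑ q ∈ Finset.range m, (c + k * (u p * v q))
      = (m:ℝ)^2 * c
        + k * ((∑ p ∈ Finset.range m, u p) * (∑ q ∈ Finset.range m, v q)) := by
  calc ∑ p ∈ Finset.range m, ∑ q ∈ Finset.range m, (c + k * (u p * v q))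
      = ∑ p ∈ Finset.range m, ((m:ℝ) * c + k * (u p * ∑ q ∈ Finset.range m, v q)) := by
        refine Finset.sum_congr rfl (fun p _ => ?_)
        rw [Finset.sum_add_distrib, Finset.sum_const, Finset.card_range, nsmul_eq_mul,
          ← Finset.mul_sum, ← Finset.mul_sum]
    _ = (m:ℝ) * ((m:ℝ) * c)
        + k * ((∑ p ∈ Finset.range m, u p) * (∑ q ∈ Finset.range m, v q)) := by
        rw [Finset.sum_add_distrib, Finset.sum_const, Finset.card_range, nsmul_eq_mul,
          ← Finset.mul_sum, ← Finset.sum_mul]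
    _ = _ := by ring

lemma hasDerivAt_ffl (m : ℕ) {g₀ : ℝ} (hg : 1 < g₀) :
    HasDerivAt (formFactorLog m)
      ((1 / 2) * (g₀⁻¹ - g₀) * (Zplus m g₀ - Zminus m g₀) ^ 2) g₀ := by
  have hg0 : (0:ℝ) < g₀ := lt_trans one_pos hg
  set c : ℝ := (2*g₀)⁻¹ with hc
  set k : ℝ := (g₀^2-1)/(2*g₀) with hk
  set u : ℕ → ℝ := fun p => (eps m g₀ (p : ℝ))⁻¹ with hu
  set v : ℕ → ℝ := fun q => (eps m g₀ ((q : ℝ) + 1/2))⁻¹ with hv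
  have h1 : HasDerivAt (fun g => ∑ p ∈ Finset.range m, ∑ q ∈ Finset.range m,
      Real.log (eps m g (p : ℝ) + eps m g ((q : ℝ) + 1/2)))
      (∑ p ∈ Finset.range m, ∑ q ∈ Finset.range m, (c + k * (u p * v q))) g₀ :=
    HasDerivAt.fun_sum fun p _ => HasDerivAt.fun_sum fun q _ => by
      simpa [hc, hk, hu, hv, mul_assoc] using hasDerivAt_logsum m (p:ℝ) ((q:ℝ)+1/2) hg
  have h2 : HasDerivAt (fun g => ∑ p ∈ Finset.range m, ∑ p' ∈ Finset.range m,
      Real.log (eps m g (p : ℝ) + eps m g ((p' : ℝ))))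
      (∑ p ∈ Finset.range m, ∑ p' ∈ Finset.range m, (c + k * (u p * u p'))) g₀ :=
    HasDerivAt.fun_sum fun p _ => HasDerivAt.fun_sum fun q _ => by
      simpa [hc, hk, hu, mul_assoc] using hasDerivAt_logsum m (p:ℝ) (q:ℝ) hg
  have h3 : HasDerivAt (fun g => ∑ q ∈ Finset.range m, ∑ q' ∈ Finset.range m,
      Real.log (eps m g ((q : ℝ) + 1/2) + eps m g ((q' : ℝ) + 1/2)))
      (∑ q ∈ Finset.range m, ∑ q' ∈ Finset.range m, (c + k * (v q * v q'))) g₀ :=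
    HasDerivAt.fun_sum fun p _ => HasDerivAt.fun_sum fun q _ => by
      simpa [hc, hk, hv, mul_assoc] using hasDerivAt_logsum m ((p:ℝ)+1/2) ((q:ℝ)+1/2) hg
  have hL := ((h1.const_mul (2:ℝ)).fun_sub h2).fun_sub h3
  have hform : formFactorLog m = fun g =>
      2 * ∑ p ∈ Finset.range m, ∑ q ∈ Finset.range m,
        Real.log (eps m g (p : ℝ) + eps m g ((q : ℝ) + 1/2))
      - ∑ p ∈ Finset.range m, ∑ p' ∈ Finset.range m,
        Real.log (eps m g (p : ℝ) + eps m g ((p' : ℝ)))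
      - ∑ q ∈ Finset.range m, ∑ q' ∈ Finset.range m,
        Real.log (eps m g ((q : ℝ) + 1/2) + eps m g ((q' : ℝ) + 1/2)) := rfl
  rw [hform]
  refine hL.congr_deriv ?_
  symm
  rw [sum_expand, sum_expand, sum_expand]
  have hZp : Zplus m g₀ = ∑ p ∈ Finset.range m, u p := rfl
  have hZm : Zminus m g₀ = ∑ q ∈ Finset.range m, v q := rfl
  rw [← hZp, ← hZm, hk]
  field_simp
  ring

/-- **Monotonicity of the form-factor ratio** (Eq. (der2)): for every `g₀ > 1`,
`L'(g₀) = (1/2)(g₀⁻¹ - g₀)(Z₊(g₀) - Z₋(g₀))² ≤ 0`, so `L` is nonincreasing on `(1, ∞)`. -/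
theorem form_factor_log_monotone (m : ℕ) (hm : 1 ≤ m) :
    (∀ g₀ : ℝ, 1 < g₀ →
      HasDerivAt (formFactorLog m)
        ((1 / 2) * (g₀⁻¹ - g₀) * (Zplus m g₀ - Zminus m g₀) ^ 2) g₀ ∧
      (1 / 2) * (g₀⁻¹ - g₀) * (Zplus m g₀ - Zminus m g₀) ^ 2 ≤ 0) ∧
    AntitoneOn (formFactorLog m) (Set.Ioi 1) := by
  have key : ∀ g₀ : ℝ, 1 < g₀ →
      HasDerivAt (formFactorLog m)
        ((1 / 2) * (g₀⁻¹ - g₀) * (Zplus m g₀ - Zminus m g₀) ^ 2) g₀ ∧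
      (1 / 2) * (g₀⁻¹ - g₀) * (Zplus m g₀ - Zminus m g₀) ^ 2 ≤ 0 := by
    intro g₀ hg
    refine ⟨hasDerivAt_ffl m hg, ?_⟩
    have h1 : g₀⁻¹ - g₀ ≤ 0 := by
      have h2 : g₀⁻¹ ≤ 1 := by
        rw [inv_le_one_iff₀]; right; exact hg.le
      linarith
    nlinarith [sq_nonneg (Zplus m g₀ - Zminus m g₀)]
  refine ⟨key, ?_⟩
  have hint : interior (Set.Ioi (1:ℝ)) = Set.Ioi 1 := interior_Ioi
  apply antitoneOn_of_deriv_nonpos (convex_Ioi 1)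
  · intro x hx
    exact ((key x hx).1.differentiableAt).continuousAt.continuousWithinAt
  · rw [hint]
    intro x hx
    exact ((key x hx).1.differentiableAt).differentiableWithinAt
  · rw [hint]
    intro x hx
    rw [(key x hx).1.deriv]
    exact (key x hx).2
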